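/- Fix z ≥ 0 and let u = F(z) ∈ [0,1]. The function defined by S(u) = Σ_{n=1}^{W} C(W-1,n-1) u^{W-n} (1-u)^{n-1} T(W,n), where T(W,n) = W²(1-ρ)/(W-ρ(W-n))² with 0 ≤ ρ < 1, is nondecreasing in u on [0,1], with S(0) = T(W,W) = 1-ρ and S(1) = T(W,1) = W²(1-ρ)/(W-ρ(W-1))². -/

import Mathlib

open Polynomial Finset

lemma bern_deriv_sum (k : ℕ) (c : ℕ → ℝ) :
    Polynomial.derivative (∑ ν ∈ Finset.range (k+2),
        Polynomial.C (c ν) * bernsteinPolynomial ℝ (k+1) ν) =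
      ((k:ℝ[X])+1) * ∑ ν ∈ Finset.range (k+1),
        Polynomial.C (c (ν+1) - c ν) * bernsteinPolynomial ℝ k ν := by
  have hz : bernsteinPolynomial ℝ k (k+1) = 0 :=
    bernsteinPolynomial.eq_zero_of_lt ℝ (Nat.lt_succ_self k)
  have hshift : ∑ ν ∈ Finset.range (k+1),
      Polynomial.C (c (ν+1)) * bernsteinPolynomial ℝ k (ν+1)
      = ∑ ν ∈ Finset.range (k+1), Polynomial.C (c ν) * bernsteinPolynomial ℝ k ν
        - Polynomial.C (c 0) * bernsteinPolynomial ℝ k 0 := by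
    have h1 := Finset.sum_range_succ' (fun ν => Polynomial.C (c ν) * bernsteinPolynomial ℝ k ν) (k+1)
    have h2 := Finset.sum_range_succ (fun ν => Polynomial.C (c ν) * bernsteinPolynomial ℝ k ν) (k+1)
    rw [h2, hz, mul_zero, add_zero] at h1
    linear_combination -h1
  rw [derivative_sum, Finset.sum_range_succ']
  simp only [derivative_C_mul, bernsteinPolynomial.derivative_succ,
    bernsteinPolynomial.derivative_zero, Nat.add_sub_cancel, Nat.cast_add, Nat.cast_one]
  have hL : ∑ ν ∈ Finset.range (k+1), Polynomial.C (c (ν+1)) *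
      (((k:ℝ[X])+1) * (bernsteinPolynomial ℝ k ν - bernsteinPolynomial ℝ k (ν+1)))
      = ((k:ℝ[X])+1) * ∑ ν ∈ Finset.range (k+1), Polynomial.C (c (ν+1)) * bernsteinPolynomial ℝ k ν
        - ((k:ℝ[X])+1) * ∑ ν ∈ Finset.range (k+1), Polynomial.C (c (ν+1)) * bernsteinPolynomial ℝ k (ν+1) := by
    rw [Finset.mul_sum, Finset.mul_sum, ← Finset.sum_sub_distrib]
    exact Finset.sum_congr rfl fun ν _ => by ring
  have hR : ∑ ν ∈ Finset.range (k+1),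
      Polynomial.C (c (ν+1) - c ν) * bernsteinPolynomial ℝ k ν
      = ∑ ν ∈ Finset.range (k+1), Polynomial.C (c (ν+1)) * bernsteinPolynomial ℝ k ν
        - ∑ ν ∈ Finset.range (k+1), Polynomial.C (c ν) * bernsteinPolynomial ℝ k ν := by
    rw [← Finset.sum_sub_distrib]
    exact Finset.sum_congr rfl fun ν _ => by rw [map_sub]; ring
  rw [hL, hR, hshift]
  ring

/-- The scheduling gain factor
`S(u) = Σ_{n=1}^W C(W-1,n-1) u^{W-n} (1-u)^{n-1} T(W,n)` with
`T(W,n) = W²(1-ρ)/(W-ρ(W-n))²` satisfies `S(0) = 1-ρ`,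
`S(1) = W²(1-ρ)/(W-ρ(W-1))²`, and `S` is nondecreasing on `[0,1]`. -/
theorem stmt8 (W : ℕ) (hW : 1 ≤ W) (ρ : ℝ) (hρ0 : 0 ≤ ρ) (hρ1 : ρ < 1)
    (S : ℝ → ℝ)
    (hS : ∀ u, S u = ∑ n ∈ Finset.Icc 1 W,
      (Nat.choose (W-1) (n-1) : ℝ) * u ^ (W - n) * (1 - u) ^ (n - 1) *
        ((W:ℝ)^2 * (1-ρ) / ((W:ℝ) - ρ * ((W:ℝ) - (n:ℝ)))^2)) :
    S 0 = 1 - ρ ∧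
    S 1 = (W:ℝ)^2 * (1-ρ) / ((W:ℝ) - ρ * ((W:ℝ) - 1))^2 ∧
    MonotoneOn S (Set.Icc (0:ℝ) 1) := by
  obtain ⟨m, rfl⟩ : ∃ m, W = m + 1 := ⟨W - 1, (Nat.succ_pred_eq_of_pos hW).symm⟩
  set b : ℕ → ℝ := fun ν => ((m:ℝ)+1)^2 * (1-ρ) / (((m:ℝ)+1) - ρ * ν)^2 with hb
  set P : Polynomial ℝ :=
    ∑ ν ∈ Finset.range (m+1), Polynomial.C (b ν) * bernsteinPolynomial ℝ m ν with hP
  have hSP : ∀ u, S u = P.eval u := by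
    intro u
    rw [hS, hP, Polynomial.eval_finset_sum]
    refine Finset.sum_nbij' (fun n => m + 1 - n) (fun ν => m + 1 - ν) ?_ ?_ ?_ ?_ ?_
    · intro n hn
      simp only [Finset.mem_Icc] at hn
      simp only [Finset.mem_range]
      omega
    · intro ν hν
      simp only [Finset.mem_range] at hν
      simp only [Finset.mem_Icc]
      omega
    · intro n hn; simp only [Finset.mem_Icc] at hn
      show m + 1 - (m + 1 - n) = n; omega
    · intro ν hν; simp only [Finset.mem_range] at hν
      show m + 1 - (m + 1 - ν) = ν; omega
    · intro n hn
      simp only [Finset.mem_Icc] at hn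
      rw [Polynomial.eval_mul, Polynomial.eval_C, bernsteinPolynomial]
      simp only [Polynomial.eval_mul, Polynomial.eval_pow, Polynomial.eval_natCast,
        Polynomial.eval_sub, Polynomial.eval_one, Polynomial.eval_X]
      have h1 : m + 1 - 1 = m := by omega
      have h2 : m - (m + 1 - n) = n - 1 := by omega
      have h3 : m.choose (m + 1 - n) = m.choose (n - 1) := by
        rw [show m + 1 - n = m - (n - 1) by omega, Nat.choose_symm (by omega)]
      have h4 : ((m + 1 - n : ℕ) : ℝ) = ((m:ℝ) + 1) - (n:ℝ) := by
        push_cast [show n ≤ m + 1 from hn.2]; ring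
      rw [h1, h2, h3, hb]
      simp only [h4]
      push_cast
      ring
  have hmR : (0:ℝ) < (m:ℝ) + 1 := by positivity
  have hS0 : S 0 = 1 - ρ := by
    rw [hSP, hP, Polynomial.eval_finset_sum]
    simp only [Polynomial.eval_mul, Polynomial.eval_C, bernsteinPolynomial.eval_at_0]
    rw [Finset.sum_eq_single 0]
    · simp only [if_pos rfl, mul_one, hb, Nat.cast_zero, mul_zero, sub_zero]
      field_simp
      simp
    · intro ν _ hν0; simp [hν0]
    · intro h; exact absurd (Finset.mem_range.2 (Nat.succ_pos m)) h
  have hS1 : S 1 = ((m:ℕ)+1:ℝ)^2 * (1-ρ) / (((m:ℕ)+1:ℝ) - ρ * (((m:ℕ)+1:ℝ) - 1))^2 := by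
    rw [hSP, hP, Polynomial.eval_finset_sum]
    simp only [Polynomial.eval_mul, Polynomial.eval_C, bernsteinPolynomial.eval_at_1]
    rw [Finset.sum_eq_single m]
    · simp only [if_pos rfl, mul_one, hb]
      push_cast; ring_nf
    · intro ν _ hνm; simp [hνm]
    · intro h; exact absurd (Finset.mem_range.2 (Nat.lt_succ_self m)) h
  refine ⟨hS0, by push_cast at hS1 ⊢; convert hS1 using 2, ?_⟩
  -- monotonicity
  have hSfun : S = fun u => P.eval u := funext hSP
  rw [hSfun]
  apply monotoneOn_of_deriv_nonneg (convex_Icc 0 1)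
  · exact (Polynomial.continuous P).continuousOn
  · exact (Polynomial.differentiable P).differentiableOn
  · intro x hx
    rw [interior_Icc] at hx
    rw [Polynomial.deriv]
    cases m with
    | zero =>
      have : P.derivative = 0 := by
        rw [hP]
        simp [bernsteinPolynomial]
      simp [this]
    | succ k =>
      rw [hP, bern_deriv_sum k b]
      simp only [Polynomial.eval_mul, Polynomial.eval_add, Polynomial.eval_natCast,
        Polynomial.eval_one, Polynomial.eval_finset_sum, Polynomial.eval_C]
      apply mul_nonneg (by positivity)
      apply Finset.sum_nonneg
      intro ν hν
      simp only [Finset.mem_range] at hν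
      apply mul_nonneg
      · -- b (ν+1) - b ν ≥ 0
        rw [sub_nonneg, hb]
        have hν1 : (ν:ℝ) + 1 ≤ (k:ℝ) + 1 + 1 := by
          have : ν + 1 ≤ k + 1 + 1 := by omega
          exact_mod_cast this
        have hd1 : (0:ℝ) < ((k:ℝ)+1+1) - ρ * ((ν:ℝ)+1) := by nlinarith
        have hd01 : ((k:ℝ)+1+1) - ρ * ((ν:ℝ)+1) ≤ ((k:ℝ)+1+1) - ρ * (ν:ℝ) := by nlinarith
        have hsq : (((k:ℝ)+1+1) - ρ * ((ν:ℝ)+1))^2 ≤ (((k:ℝ)+1+1) - ρ * (ν:ℝ))^2 := by nlinarith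
        have := div_le_div_of_nonneg_left
          (show (0:ℝ) ≤ ((k:ℝ)+1+1)^2 * (1-ρ) by nlinarith) (by positivity) hsq
        push_cast at this ⊢
        convert this using 3
      · -- bernstein eval nonneg
        rw [bernsteinPolynomial]
        simp only [Polynomial.eval_mul, Polynomial.eval_pow, Polynomial.eval_natCast,
          Polynomial.eval_sub, Polynomial.eval_one, Polynomial.eval_X]
        have h0 : (0:ℝ) ≤ x := le_of_lt hx.1
        have h1 : (0:ℝ) ≤ 1 - x := by linarith [hx.2]
        positivity
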